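/- Let G(x) = 1/(4π|x|). Under the hypotheses (H1♯): n·d_n → ∞ where d_n = min_{i≠j}|x_i - x_j|, and (H2♯): (1/n)Σ_i ( (1/n)Σ_{j≠i} 1/|x_i - x_j| - ∫ ρ(y)/|x_i - y| dy )² → 0, the quantity Σ_i ∫_{B_i} | Σ_{j≠i}(G(x - x_j) - G(x_i - x_j)) |² dx tends to 0 as n → ∞, where B_i = B(x_i, 1/n). Specifically it is bounded by C/(n d_n)². -/

import Mathlib

open MeasureTheory Metric Filter Topology Real
open Set
open scoped ENNReal NNReal

local notation "E3" => EuclideanSpace ℝ (Fin 3)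

lemma invNormIntegrable (r : ℝ) :
    IntegrableOn (fun y : E3 => ‖y‖⁻¹) (ball 0 r) := by
  rcases le_or_gt r 0 with h | h
  · rw [ball_eq_empty.2 h]; exact integrableOn_empty
  refine ⟨(measurable_norm.inv).aestronglyMeasurable, ?_⟩
  have h1 : ∀ y : E3, ‖(‖y‖⁻¹ : ℝ)‖ₑ = ENNReal.ofReal (‖y‖⁻¹) := fun y => by
    rw [← ofReal_norm, Real.norm_eq_abs,
      abs_of_nonneg (inv_nonneg.2 (norm_nonneg _))]
  rw [HasFiniteIntegral]
  simp_rw [h1]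
  rw [lintegral_eq_lintegral_meas_lt _ (ae_of_all _ fun y => inv_nonneg.2 (norm_nonneg _))
    (measurable_norm.inv.aemeasurable)]
  have ha : (0:ℝ) < r⁻¹ := inv_pos.2 h
  have hsplit : Ioi (0:ℝ) = Ioc 0 r⁻¹ ∪ Ioi r⁻¹ := (Ioc_union_Ioi_eq_Ioi ha.le).symm
  rw [hsplit, lintegral_union measurableSet_Ioi Ioc_disjoint_Ioi_same]
  have hV : volume (ball (0:E3) 1) < ⊤ := measure_ball_lt_top
  apply ENNReal.add_lt_top.2
  constructor
  · calc ∫⁻ t in Ioc 0 r⁻¹, volume.restrict (ball (0:E3) r) {a | t < ‖a‖⁻¹}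
        ≤ ∫⁻ _ in Ioc 0 r⁻¹, volume (ball (0:E3) r) := by
          apply lintegral_mono fun t => ?_
          exact le_trans (measure_mono (subset_univ _))
            (le_of_eq (by simp [Measure.restrict_apply_univ]))
      _ = volume (ball (0:E3) r) * volume (Ioc (0:ℝ) r⁻¹) := by
          rw [setLIntegral_const]
      _ < ⊤ := ENNReal.mul_lt_top measure_ball_lt_top (by simp)
  · have hbound : ∀ t ∈ Ioi r⁻¹, volume.restrict (ball (0:E3) r) {a : E3 | t < ‖a‖⁻¹}
        ≤ ENNReal.ofReal ((t⁻¹)^3) * volume (ball (0:E3) 1) := by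
      intro t ht
      have ht0 : (0:ℝ) < t := lt_trans ha ht
      have hsub : {a : E3 | t < ‖a‖⁻¹} ⊆ ball (0:E3) t⁻¹ := by
        intro a haa
        simp only [mem_setOf_eq] at haa
        have hna : 0 < ‖a‖ := by
          by_contra hc
          push_neg at hc
          have : ‖a‖ = 0 := le_antisymm hc (norm_nonneg a)
          rw [this] at haa; simp at haa; linarith
        have : ‖a‖ < t⁻¹ := by
          have := (inv_lt_inv₀ (inv_pos.2 hna) ht0).2 haa
          simpa using this
        simpa [mem_ball, dist_zero_right] using this
      calc volume.restrict (ball (0:E3) r) {a : E3 | t < ‖a‖⁻¹}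
          ≤ volume {a : E3 | t < ‖a‖⁻¹} := Measure.restrict_le_self _
        _ ≤ volume (ball (0:E3) t⁻¹) := measure_mono hsub
        _ = ENNReal.ofReal ((t⁻¹)^3) * volume (ball (0:E3) 1) := by
            rw [Measure.addHaar_ball _ _ (inv_pos.2 ht0).le]
            congr 2
            simp [finrank_euclideanSpace]
    calc ∫⁻ t in Ioi r⁻¹, volume.restrict (ball (0:E3) r) {a : E3 | t < ‖a‖⁻¹}
        ≤ ∫⁻ t in Ioi r⁻¹, ENNReal.ofReal ((t⁻¹)^3) * volume (ball (0:E3) 1) := by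
          apply setLIntegral_mono' measurableSet_Ioi hbound
      _ = (∫⁻ t in Ioi r⁻¹, ENNReal.ofReal ((t⁻¹)^3)) * volume (ball (0:E3) 1) := by
          rw [lintegral_mul_const]
          exact (ENNReal.measurable_ofReal.comp ((measurable_id.inv).pow_const 3))
      _ < ⊤ := by
          apply ENNReal.mul_lt_top _ hV
          have hint : IntegrableOn (fun t : ℝ => t ^ (-3:ℝ)) (Ioi r⁻¹) :=
            integrableOn_Ioi_rpow_of_lt (by norm_num) ha
          have := hint.2
          rw [HasFiniteIntegral] at this
          refine lt_of_le_of_lt (lintegral_mono_ae ?_) this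
          filter_upwards [ae_restrict_mem measurableSet_Ioi] with t ht
          have ht0 : (0:ℝ) < t := lt_trans ha ht
          rw [← ofReal_norm, Real.norm_eq_abs,
            abs_of_nonneg (rpow_nonneg ht0.le _)]
          apply ENNReal.ofReal_le_ofReal
          rw [show (-3:ℝ) = -(3:ℕ) by norm_num, rpow_neg ht0.le, rpow_natCast]
          rw [inv_pow]

lemma pot_bound (ρ : E3 → ℝ) (hρbdd : ∃ M, ∀ y, |ρ y| ≤ M)
    (hρsupp : HasCompactSupport ρ) :
    ∃ K : ℝ, 0 ≤ K ∧ ∀ x : E3, |∫ y, ρ y / dist x y| ≤ K := by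
  obtain ⟨M₀, hM₀⟩ := hρbdd
  set M : ℝ := max M₀ 0 with hM
  have hM0 : 0 ≤ M := le_max_right _ _
  have hMb : ∀ y, |ρ y| ≤ M := fun y => le_trans (hM₀ y) (le_max_left _ _)
  obtain ⟨R₀, hR₀⟩ := (hρsupp.isBounded).subset_closedBall 0
  set R : ℝ := max R₀ 1 with hR
  have hR1 : (0:ℝ) < R := lt_of_lt_of_le one_pos (le_max_right _ _)
  have hRsupp : tsupport ρ ⊆ closedBall 0 R :=
    hR₀.trans (closedBall_subset_closedBall (le_max_left _ _))
  set F : E3 → ℝ := (ball (0:E3) (2*R)).indicator (fun u => ‖u‖⁻¹) with hF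
  have hFint : Integrable F := (integrable_indicator_iff measurableSet_ball).2
    (invNormIntegrable (2*R))
  have hF0 : ∀ u, 0 ≤ F u := fun u =>
    indicator_nonneg (fun v _ => inv_nonneg.2 (norm_nonneg v)) u
  set J : ℝ := ∫ y in ball (0:E3) (2*R), ‖y‖⁻¹ with hJ
  have hJ0 : 0 ≤ J := setIntegral_nonneg measurableSet_ball
    (fun y _ => inv_nonneg.2 (norm_nonneg y))
  set K : ℝ := M * J + M/(2*R) * (volume (closedBall (0:E3) R)).toReal with hK
  refine ⟨K, by positivity, fun x => ?_⟩
  set g : E3 → ℝ := fun y => M * F (x - y)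
    + (M/(2*R)) * (closedBall (0:E3) R).indicator (fun _ => (1:ℝ)) y with hg
  have hg1 : Integrable (fun y => F (x - y)) := hFint.comp_sub_left x
  have hg2 : Integrable ((closedBall (0:E3) R).indicator (fun _ => (1:ℝ))) :=
    (integrable_indicator_iff measurableSet_closedBall).2
      (integrableOn_const measure_closedBall_lt_top.ne)
  have hgint : Integrable g := (hg1.const_mul M).add (hg2.const_mul _)
  have hg0 : ∀ y, 0 ≤ g y := by
    intro y
    apply add_nonneg (mul_nonneg hM0 (hF0 _))
    apply mul_nonneg (by positivity)
    exact indicator_nonneg (fun _ _ => zero_le_one) y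
  have hbound : ∀ y, ‖ρ y / dist x y‖ ≤ g y := by
    intro y
    by_cases hy : y ∈ tsupport ρ
    · by_cases hxy : dist x y = 0
      · rw [hxy]; simp [div_zero]; exact hg0 y
      · have hd : 0 < dist x y := lt_of_le_of_ne dist_nonneg (Ne.symm hxy)
        rw [Real.norm_eq_abs, abs_div, abs_of_nonneg dist_nonneg]
        by_cases h2 : dist x y < 2*R
        · have hmem : x - y ∈ ball (0:E3) (2*R) := by
            rw [mem_ball, dist_zero_right, ← dist_eq_norm]; exact h2
          have hFxy : F (x - y) = ‖x - y‖⁻¹ := by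
            rw [hF, indicator_of_mem hmem]
          have : |ρ y| / dist x y ≤ M * F (x - y) := by
            rw [hFxy, ← dist_eq_norm]
            rw [div_eq_mul_inv]
            exact mul_le_mul_of_nonneg_right (hMb y) (inv_nonneg.2 dist_nonneg)
          refine this.trans ?_
          simp only [hg]
          exact le_add_of_nonneg_right (mul_nonneg (by positivity)
            (indicator_nonneg (fun _ _ => zero_le_one) y))
        · push_neg at h2
          have hmem : y ∈ closedBall (0:E3) R := hRsupp hy
          have hind : (closedBall (0:E3) R).indicator (fun _ => (1:ℝ)) y = 1 :=
            indicator_of_mem hmem _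
          have h1 : |ρ y| / dist x y ≤ M / (2*R) :=
            div_le_div₀ hM0 (hMb y) (by positivity) h2
          have h3 : 0 ≤ M * F (x - y) := mul_nonneg hM0 (hF0 _)
          rw [hg]
          simp only [hind, mul_one]
          linarith
    · rw [image_eq_zero_of_notMem_tsupport hy]
      simp only [zero_div, norm_zero]
      exact hg0 y
  have hgval : ∫ y, g y = K := by
    rw [hg]
    rw [integral_add (hg1.const_mul M) (hg2.const_mul _), integral_const_mul,
      integral_const_mul, integral_sub_left_eq_self F volume x]
    rw [hF, integral_indicator measurableSet_ball]
    rw [integral_indicator_const _ measurableSet_closedBall]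
    simp [hK, hJ, smul_eq_mul, measureReal_def]
  calc |∫ y, ρ y / dist x y| = ‖∫ y, ρ y / dist x y‖ := (Real.norm_eq_abs _).symm
    _ ≤ ∫ y, g y := norm_integral_le_of_norm_le hgint (ae_of_all _ hbound)
    _ = K := hgval

set_option maxHeartbeats 1000000 in
/-- Under (H1♯): `n d_n → ∞` with `d_n` the minimal inter-point distance, and (H2♯):
`(1/n) Σ_i ((1/n) Σ_{j≠i} 1/|x_i - x_j| - ∫ ρ(y)/|x_i - y| dy)² → 0`, the quantity
`Σ_i ∫_{B_i} |Σ_{j≠i} (G(x - x_j) - G(x_i - x_j))|² dx` (with `G(x) = 1/(4π|x|)` and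
`B_i = B(x_i, 1/n)`) tends to `0`; in fact it is eventually bounded by `C/(n d_n)²`. -/
theorem stmt8 (x : (n : ℕ) → Fin n → EuclideanSpace ℝ (Fin 3))
    (ρ : EuclideanSpace ℝ (Fin 3) → ℝ)
    (hρbdd : ∃ M, ∀ y, |ρ y| ≤ M) (hρsupp : HasCompactSupport ρ)
    (d : ℕ → ℝ) (hd_pos : ∀ n, 0 < d n)
    (hd_min : ∀ n, ∀ i j : Fin n, i ≠ j → d n ≤ dist (x n i) (x n j))
    (H1s : Tendsto (fun n : ℕ => (n : ℝ) * d n) atTop atTop)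
    (H2s : Tendsto (fun n : ℕ => (1 / (n : ℝ)) * ∑ i : Fin n,
      ((1 / (n : ℝ)) * ∑ j ∈ Finset.univ.erase i, 1 / dist (x n i) (x n j)
        - ∫ y, ρ y / dist (x n i) y) ^ 2) atTop (𝓝 0)) :
    (∃ C : ℝ, 0 < C ∧ ∀ᶠ n in atTop,
      (∑ i : Fin n, ∫ z in ball (x n i) (1 / n),
        |∑ j ∈ Finset.univ.erase i,
          (1 / (4 * π * ‖z - x n j‖) - 1 / (4 * π * ‖x n i - x n j‖))| ^ 2)
        ≤ C / ((n : ℝ) * d n) ^ 2) ∧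
    Tendsto (fun n : ℕ => ∑ i : Fin n, ∫ z in ball (x n i) (1 / n),
        |∑ j ∈ Finset.univ.erase i,
          (1 / (4 * π * ‖z - x n j‖) - 1 / (4 * π * ‖x n i - x n j‖))| ^ 2)
      atTop (𝓝 0) := by
  obtain ⟨K, hK0, hK⟩ := pot_bound ρ hρbdd hρsupp
  set V : ℝ := (volume (ball (0:E3) 1)).toReal with hV
  have hV0 : 0 ≤ V := ENNReal.toReal_nonneg
  set C : ℝ := V * (2 + 2 * K ^ 2) / (4 * π ^ 2) + 1 with hC
  have hB0 : 0 ≤ V * (2 + 2 * K ^ 2) / (4 * π ^ 2) := by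
    apply div_nonneg (mul_nonneg hV0 (by positivity)) (by positivity)
  have hC0 : 0 < C := by rw [hC]; linarith
  have key : ∀ᶠ n in atTop,
      (∑ i : Fin n, ∫ z in ball (x n i) (1 / n),
        |∑ j ∈ Finset.univ.erase i,
          (1 / (4 * π * ‖z - x n j‖) - 1 / (4 * π * ‖x n i - x n j‖))| ^ 2)
        ≤ C / ((n : ℝ) * d n) ^ 2 := by
    filter_upwards [H1s.eventually_ge_atTop 2,
      H2s.eventually (eventually_le_nhds zero_lt_one),
      eventually_ge_atTop 1] with n h1 h2 hn1
    have hN : (1:ℝ) ≤ (n:ℝ) := by exact_mod_cast hn1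
    have hN0 : (0:ℝ) < (n:ℝ) := by linarith
    have hD0 : 0 < d n := hd_pos n
    have hπ : (0:ℝ) < π := pi_pos
    have hNne : (n:ℝ) ≠ 0 := ne_of_gt hN0
    have hDne : d n ≠ 0 := ne_of_gt hD0
    have hrn : 1/(n:ℝ) ≤ d n / 2 := by
      rw [div_le_div_iff₀ hN0 two_pos]; nlinarith [h1]
    -- pointwise bound on each ball
    have bnd : ∀ i : Fin n, ∀ z ∈ ball (x n i) (1/(n:ℝ)),
        |∑ j ∈ Finset.univ.erase i,
          (1 / (4 * π * ‖z - x n j‖) - 1 / (4 * π * ‖x n i - x n j‖))|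
        ≤ 1/(2*π*(n:ℝ)*d n) * ∑ j ∈ Finset.univ.erase i, 1 / dist (x n i) (x n j) := by
      intro i z hz
      have hz' : dist z (x n i) < 1/(n:ℝ) := mem_ball.1 hz
      refine le_trans (Finset.abs_sum_le_sum_abs _ _) ?_
      rw [Finset.mul_sum]
      refine Finset.sum_le_sum fun j hj => ?_
      have hji : j ≠ i := Finset.ne_of_mem_erase hj
      have hb : d n ≤ dist (x n i) (x n j) := hd_min n i j hji.symm
      rw [dist_eq_norm] at hb ⊢
      set b := ‖x n i - x n j‖ with hbdef
      set a := ‖z - x n j‖ with hadef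
      have key1 : |b - a| ≤ 1/(n:ℝ) := by
        calc |b - a| ≤ ‖(x n i - x n j) - (z - x n j)‖ := abs_norm_sub_norm_le _ _
          _ = ‖x n i - z‖ := by rw [sub_sub_sub_cancel_right]
          _ = dist z (x n i) := by rw [← dist_eq_norm, dist_comm]
          _ ≤ 1/(n:ℝ) := hz'.le
      have hkey1 := abs_le.1 key1
      have key2 : b/2 ≤ a := by linarith
      have hb0 : 0 < b := lt_of_lt_of_le hD0 hb
      have ha0 : 0 < a := lt_of_lt_of_le (half_pos hb0) key2
      have hdiff : 1/(4*π*a) - 1/(4*π*b) = (b - a)/(4*π*a*b) := by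
        field_simp
      rw [hdiff, abs_div, abs_of_pos (show (0:ℝ) < 4*π*a*b by positivity)]
      calc |b - a|/(4*π*a*b) ≤ (1/(n:ℝ))/(4*π*(b/2)*b) := by
            apply div_le_div₀ (by positivity) key1 (by positivity)
            have h4 := mul_le_mul_of_nonneg_right key2
              (le_of_lt (show (0:ℝ) < 4*π*b by positivity))
            nlinarith [h4]
        _ = 1/(2*π*(n:ℝ)) * (1/b) * (1/b) := by
            field_simp; ring
        _ ≤ 1/(2*π*(n:ℝ)) * (1/d n) * (1/b) := by
            apply mul_le_mul_of_nonneg_right _ (by positivity)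
            apply mul_le_mul_of_nonneg_left _ (by positivity)
            exact one_div_le_one_div_of_le hD0 hb
        _ = 1/(2*π*(n:ℝ)*d n) * (1/b) := by
            field_simp
    -- volume of the small ball
    have volball : ∀ i : Fin n, (volume (ball (x n i) (1/(n:ℝ)))).toReal
        = (1/(n:ℝ))^3 * V := by
      intro i
      rw [Measure.addHaar_ball _ _ (by positivity : (0:ℝ) ≤ 1/(n:ℝ))]
      rw [ENNReal.toReal_mul, ENNReal.toReal_ofReal (by positivity)]
      congr 2
      simp [finrank_euclideanSpace]
    -- per-i integral bound
    have intb : ∀ i : Fin n,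
        (∫ z in ball (x n i) (1/(n:ℝ)),
          |∑ j ∈ Finset.univ.erase i,
            (1 / (4 * π * ‖z - x n j‖) - 1 / (4 * π * ‖x n i - x n j‖))| ^ 2)
        ≤ (1/(2*π*(n:ℝ)*d n) * ∑ j ∈ Finset.univ.erase i, 1 / dist (x n i) (x n j))^2
            * ((1/(n:ℝ))^3 * V) := by
      intro i
      have hci0 : 0 ≤ 1/(2*π*(n:ℝ)*d n)
          * ∑ j ∈ Finset.univ.erase i, 1 / dist (x n i) (x n j) := by
        apply mul_nonneg (by positivity)
        exact Finset.sum_nonneg fun j _ => by positivity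
      have hmeasf : Measurable (fun z : E3 =>
          |∑ j ∈ Finset.univ.erase i,
            (1 / (4 * π * ‖z - x n j‖) - 1 / (4 * π * ‖x n i - x n j‖))| ^ 2) := by
        apply Measurable.pow_const
        apply Measurable.abs
        apply Finset.measurable_sum
        intro j _
        apply Measurable.sub _ measurable_const
        apply Measurable.div measurable_const
        exact ((measurable_id.sub measurable_const).norm).const_mul (4*π)
      have hb2 : ∀ z ∈ ball (x n i) (1/(n:ℝ)),
          ‖|∑ j ∈ Finset.univ.erase i,
            (1 / (4 * π * ‖z - x n j‖) - 1 / (4 * π * ‖x n i - x n j‖))| ^ 2‖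
          ≤ (1/(2*π*(n:ℝ)*d n)
              * ∑ j ∈ Finset.univ.erase i, 1 / dist (x n i) (x n j))^2 := by
        intro z hz
        rw [Real.norm_eq_abs, abs_of_nonneg (by positivity)]
        exact pow_le_pow_left₀ (abs_nonneg _) (bnd i z hz) 2
      have hnorm := norm_setIntegral_le_of_norm_le_const
        (show volume (ball (x n i) (1/(n:ℝ))) < ⊤ from measure_ball_lt_top) hb2
      calc (∫ z in ball (x n i) (1/(n:ℝ)),
            |∑ j ∈ Finset.univ.erase i,
              (1 / (4 * π * ‖z - x n j‖) - 1 / (4 * π * ‖x n i - x n j‖))| ^ 2)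
          ≤ ‖∫ z in ball (x n i) (1/(n:ℝ)),
            |∑ j ∈ Finset.univ.erase i,
              (1 / (4 * π * ‖z - x n j‖) - 1 / (4 * π * ‖x n i - x n j‖))| ^ 2‖ :=
            le_abs_self _
        _ ≤ _ * (volume (ball (x n i) (1/(n:ℝ)))).toReal := hnorm
        _ = _ := by rw [volball i]
    -- sum it up
    set Es : ℝ := ∑ i : Fin n,
      ((1 / (n : ℝ)) * ∑ j ∈ Finset.univ.erase i, 1 / dist (x n i) (x n j)
        - ∫ y, ρ y / dist (x n i) y) ^ 2 with hEs
    have hEs0 : 0 ≤ Es := Finset.sum_nonneg fun i _ => sq_nonneg _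
    have hEsN : Es ≤ (n:ℝ) := by
      have h' := mul_le_mul_of_nonneg_left h2 (le_of_lt hN0)
      rw [mul_one] at h'
      calc Es = (n:ℝ) * (1/(n:ℝ) * Es) := by field_simp
        _ ≤ (n:ℝ) := h'
    have hsq : ∀ i : Fin n,
        (1/(2*π*(n:ℝ)*d n) * ∑ j ∈ Finset.univ.erase i, 1 / dist (x n i) (x n j))^2
        ≤ (1/(2*π*d n))^2 *
          (2 * ((1 / (n : ℝ)) * ∑ j ∈ Finset.univ.erase i, 1 / dist (x n i) (x n j)
            - ∫ y, ρ y / dist (x n i) y) ^ 2 + 2 * K ^ 2) := by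
      intro i
      have hIK := abs_le.1 (hK (x n i))
      have heq : 1/(2*π*(n:ℝ)*d n) * ∑ j ∈ Finset.univ.erase i, 1 / dist (x n i) (x n j)
          = 1/(2*π*d n) * ((1/(n:ℝ)) * ∑ j ∈ Finset.univ.erase i, 1 / dist (x n i) (x n j)) := by
        rw [show 1/(2*π*(n:ℝ)*d n) = 1/(2*π*d n) * (1/(n:ℝ)) by
          field_simp]
        ring
      rw [heq, mul_pow]
      apply mul_le_mul_of_nonneg_left _ (by positivity)
      nlinarith [sq_nonneg ((1/(n:ℝ)) * ∑ j ∈ Finset.univ.erase i, 1 / dist (x n i) (x n j)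
          - 2 * ∫ y, ρ y / dist (x n i) y), sq_le_sq' hIK.1 hIK.2]
    calc (∑ i : Fin n, ∫ z in ball (x n i) (1 / n),
          |∑ j ∈ Finset.univ.erase i,
            (1 / (4 * π * ‖z - x n j‖) - 1 / (4 * π * ‖x n i - x n j‖))| ^ 2)
        ≤ ∑ i : Fin n,
          (1/(2*π*(n:ℝ)*d n) * ∑ j ∈ Finset.univ.erase i, 1 / dist (x n i) (x n j))^2
            * ((1/(n:ℝ))^3 * V) := Finset.sum_le_sum fun i _ => intb i
      _ ≤ ∑ i : Fin n, ((1/(2*π*d n))^2 *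
            (2 * ((1 / (n : ℝ)) * ∑ j ∈ Finset.univ.erase i, 1 / dist (x n i) (x n j)
              - ∫ y, ρ y / dist (x n i) y) ^ 2 + 2 * K ^ 2)) * ((1/(n:ℝ))^3 * V) := by
          refine Finset.sum_le_sum fun i _ => ?_
          exact mul_le_mul_of_nonneg_right (hsq i) (by positivity)
      _ = ((1/(2*π*d n))^2 * (2 * Es + 2 * (n:ℝ) * K ^ 2)) * ((1/(n:ℝ))^3 * V) := by
          rw [← Finset.sum_mul, ← Finset.mul_sum, Finset.sum_add_distrib,
            Finset.sum_const, Finset.card_univ, Fintype.card_fin, ← Finset.mul_sum,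
            ← hEs, nsmul_eq_mul]
          ring
      _ ≤ ((1/(2*π*d n))^2 * (2 * (n:ℝ) + 2 * (n:ℝ) * K ^ 2)) * ((1/(n:ℝ))^3 * V) := by
          apply mul_le_mul_of_nonneg_right _ (by positivity)
          apply mul_le_mul_of_nonneg_left _ (by positivity)
          have h5 : 2 * Es ≤ 2 * (n:ℝ) :=
            mul_le_mul_of_nonneg_left hEsN (by norm_num)
          linarith [h5]
      _ = V * (2 + 2 * K ^ 2) / (4 * π ^ 2) / ((n:ℝ) * d n) ^ 2 := by
          field_simp
          ring
      _ ≤ C / ((n:ℝ) * d n) ^ 2 := by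
          apply div_le_div_of_nonneg_right ?_ (by positivity)
          · rw [hC]; linarith
  refine ⟨⟨C, hC0, key⟩, ?_⟩
  have hpos : ∀ᶠ n : ℕ in atTop, 0 ≤ ∑ i : Fin n, ∫ z in ball (x n i) (1 / n),
      |∑ j ∈ Finset.univ.erase i,
        (1 / (4 * π * ‖z - x n j‖) - 1 / (4 * π * ‖x n i - x n j‖))| ^ 2 :=
    Eventually.of_forall fun n => Finset.sum_nonneg fun i _ =>
      setIntegral_nonneg measurableSet_ball fun z _ => by positivity
  refine squeeze_zero' hpos key ?_
  exact tendsto_const_nhds.div_atTop ((tendsto_pow_atTop two_ne_zero).comp H1s)
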